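/- arXiv:2509.16740 — 3 statements merged into one kernel-verified Lean document; each statement's English description precedes it below -/
import Mathlib

section
/- Let f be a meromorphic function in the unit disc 𝔻, and let ψ₁, ψ₂, ψ₃ be three meromorphic functions in 𝔻, each continuous on ∂𝔻, such that ψᵢ(z) ≠ ψⱼ(z) for all z ∈ ∂𝔻 and all 1 ≤ i < j ≤ 3 (as values in the Riemann sphere ℂ ∪ {∞}). Suppose ψ₁, ψ₂, ψ₃ share f on 𝔻, and set A = {z ∈ 𝔻 : ψ₁(z) = f(z)} = {z ∈ 𝔻 : ψ₂(z) = f(z)} = {z ∈ 𝔻 : ψ₃(z) = f(z)}. Let zₙ ∈ 𝔻 with zₙ → z₀ ∈ ∂𝔻, let ρₙ > 0 with ρₙ → 0, and suppose gₙ(z) = f(zₙ + ρₙ·z) converges uniformly on each compact subset of ℂ (with respect to the spherical metric on the Riemann sphere) to a non-constant meromorphic function g on ℂ. Then for each fixed z ∈ ℂ, the set {n ∈ ℕ : zₙ + ρₙ·z ∈ A} is finite. -/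
open Complex Filter Topology Metric Set
open scoped OnePoint Classical

noncomputable section

/-- The Riemann-sphere-valued version of a meromorphic function: the usual value at
points of analyticity, and `∞` elsewhere (in particular at poles). -/
def sphv (f : ℂ → ℂ) (z : ℂ) : OnePoint ℂ :=
  if AnalyticAt ℂ f z then (f z : OnePoint ℂ) else ∞

/-- Chordal (spherical) distance on `Option ℂ`. -/
def sphDistAux : Option ℂ → Option ℂ → ℝ
  | Option.some a, Option.some b =>
      2 * ‖a - b‖ /
        (Real.sqrt (1 + ‖a‖ ^ 2) * Real.sqrt (1 + ‖b‖ ^ 2))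
  | Option.some a, Option.none => 2 / Real.sqrt (1 + ‖a‖ ^ 2)
  | Option.none, Option.some b => 2 / Real.sqrt (1 + ‖b‖ ^ 2)
  | Option.none, Option.none => 0

/-- Chordal (spherical) distance on the Riemann sphere `OnePoint ℂ`. -/
def sphDist (x y : OnePoint ℂ) : ℝ := sphDistAux x y

/-- The spherical derivative `f^#`: `|f'|/(1+|f|²)` at points of analyticity, and the
limiting value (equal to `(1/f)^#`) at poles. -/
def sphDerivAt (f : ℂ → ℂ) (z : ℂ) : ℝ :=
  if AnalyticAt ℂ f z then ‖deriv f z‖ / (1 + ‖f z‖ ^ 2)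
  else Filter.limsup (fun w => ‖deriv f w‖ / (1 + ‖f w‖ ^ 2)) (𝓝[≠] z)

/-- A genuinely meromorphic function on `s`: meromorphic, and at every point of `s` it is
either analytic or has a pole (tends to `∞`). -/
def MeromorphicNiceOn (f : ℂ → ℂ) (s : Set ℂ) : Prop :=
  MeromorphicOn f s ∧ ∀ z ∈ s, AnalyticAt ℂ f z ∨ Tendsto f (𝓝[≠] z) (cocompact ℂ)

/-- A meromorphic function on the unit disc is a normal function if `(1-|z|²) f^#(z)` is
bounded on the disc. -/
def IsNormalFunction (f : ℂ → ℂ) : Prop :=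
  ∃ C : ℝ, ∀ z ∈ ball (0 : ℂ) 1, (1 - ‖z‖ ^ 2) * sphDerivAt f z ≤ C


/-! ### Auxiliary lemmas about `sphDist` -/

lemma sphDist_coe_coe (a b : ℂ) :
    sphDist (a : OnePoint ℂ) (b : OnePoint ℂ) = 2 * ‖a - b‖ /
      (Real.sqrt (1 + ‖a‖ ^ 2) * Real.sqrt (1 + ‖b‖ ^ 2)) := rfl

lemma sphDist_coe_infty (a : ℂ) :
    sphDist (a : OnePoint ℂ) ∞ = 2 / Real.sqrt (1 + ‖a‖ ^ 2) := rfl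

lemma sphDist_infty_coe (b : ℂ) :
    sphDist ∞ (b : OnePoint ℂ) = 2 / Real.sqrt (1 + ‖b‖ ^ 2) := rfl

lemma sphDist_infty_infty : sphDist (∞ : OnePoint ℂ) ∞ = 0 := rfl

lemma sqrt_one_add_sq_pos (t : ℝ) : 0 < Real.sqrt (1 + t ^ 2) :=
  Real.sqrt_pos.2 (by positivity)

lemma sphDist_nonneg (x y : OnePoint ℂ) : 0 ≤ sphDist x y := by
  cases x with
  | infty => cases y with
    | infty => simp [sphDist, sphDistAux]
    | coe b => exact div_nonneg (by norm_num) (sqrt_one_add_sq_pos _).le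
  | coe a => cases y with
    | infty => exact div_nonneg (by norm_num) (sqrt_one_add_sq_pos _).le
    | coe b =>
      exact div_nonneg (by positivity)
        (mul_nonneg (sqrt_one_add_sq_pos _).le (sqrt_one_add_sq_pos _).le)

lemma sphDist_eq_zero {x y : OnePoint ℂ} (h : sphDist x y = 0) : x = y := by
  cases x with
  | infty => cases y with
    | infty => rfl
    | coe b =>
      exfalso
      have : (0:ℝ) < 2 / Real.sqrt (1 + ‖b‖ ^ 2) :=
        div_pos (by norm_num) (sqrt_one_add_sq_pos _)
      rw [show sphDist ∞ (b : OnePoint ℂ) = _ from rfl] at h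
      exact this.ne' h
  | coe a => cases y with
    | infty =>
      exfalso
      have : (0:ℝ) < 2 / Real.sqrt (1 + ‖a‖ ^ 2) :=
        div_pos (by norm_num) (sqrt_one_add_sq_pos _)
      exact this.ne' h
    | coe b =>
      have hd : 0 < Real.sqrt (1 + ‖a‖ ^ 2) * Real.sqrt (1 + ‖b‖ ^ 2) :=
        mul_pos (sqrt_one_add_sq_pos _) (sqrt_one_add_sq_pos _)
      rw [sphDist_coe_coe, div_eq_zero_iff] at h
      rcases h with h | h
      · have h2 : ‖a - b‖ = 0 := by linarith
        have h3 : a = b := by simpa [sub_eq_zero] using h2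
        exact congrArg _ h3
      · exact absurd h hd.ne'

/-- `(t+k)/√(1+t²) → 1` as `t → ∞`. -/
lemma tendsto_aux1 (k : ℝ) :
    Tendsto (fun t : ℝ => (t + k) / Real.sqrt (1 + t ^ 2)) atTop (𝓝 1) := by
  have h0 : Tendsto (fun t : ℝ => (1 + k * t⁻¹) / Real.sqrt (t⁻¹ ^ 2 + 1)) atTop (𝓝 1) := by
    have hinv : Tendsto (fun t : ℝ => t⁻¹) atTop (𝓝 0) := tendsto_inv_atTop_zero
    have hnum : Tendsto (fun t : ℝ => 1 + k * t⁻¹) atTop (𝓝 1) := by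
      have := (tendsto_const_nhds (x := (1:ℝ)) (f := atTop)).add
        ((tendsto_const_nhds (x := k)).mul hinv)
      simpa using this
    have hden : Tendsto (fun t : ℝ => Real.sqrt (t⁻¹ ^ 2 + 1)) atTop (𝓝 1) := by
      have h1 : Tendsto (fun t : ℝ => t⁻¹ ^ 2 + 1) atTop (𝓝 1) := by
        have := ((hinv.mul hinv)).add (tendsto_const_nhds (x := (1:ℝ)))
        simpa [sq] using this
      have := (Real.continuous_sqrt.tendsto 1).comp h1
      rwa [Real.sqrt_one] at this
    have := hnum.div hden one_ne_zero
    rwa [div_one] at this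
  refine h0.congr' ?_
  filter_upwards [eventually_gt_atTop (0:ℝ)] with t ht
  have hsq : Real.sqrt (t⁻¹ ^ 2 + 1) = Real.sqrt (1 + t ^ 2) / t := by
    rw [show t⁻¹ ^ 2 + 1 = (1 + t ^ 2) / t ^ 2 by field_simp,
      Real.sqrt_div (by positivity) (t ^ 2), Real.sqrt_sq ht.le]
  rw [hsq]
  have hs := (sqrt_one_add_sq_pos t).ne'
  field_simp

/-- `2/√(1+t²) → 0` as `t → ∞`. -/
lemma tendsto_aux0 : Tendsto (fun t : ℝ => 2 / Real.sqrt (1 + t ^ 2)) atTop (𝓝 0) := by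
  apply Tendsto.div_atTop (tendsto_const_nhds (x := (2:ℝ)))
  apply tendsto_atTop_mono' atTop ?_ tendsto_id
  filter_upwards [eventually_ge_atTop (0:ℝ)] with t ht
  calc t = Real.sqrt (t ^ 2) := (Real.sqrt_sq ht).symm
  _ ≤ _ := Real.sqrt_le_sqrt (by linarith)

/-- `2(t+k)/(√(1+t²) D) → 2/D` as `t → ∞`, for `D > 0`. -/
lemma tendsto_aux2 (k D : ℝ) (hD : 0 < D) :
    Tendsto (fun t : ℝ => 2 * (t + k) / (Real.sqrt (1 + t ^ 2) * D)) atTop (𝓝 (2 / D)) := by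
  have h := (tendsto_aux1 k).const_mul (2 / D)
  rw [mul_one] at h
  refine h.congr fun t => ?_
  rw [div_mul_div_comm, mul_comm D]

/-- The spherical distance to a fixed point is continuous on the Riemann sphere. -/
lemma sphDist_continuous (C : OnePoint ℂ) :
    Continuous (fun x : OnePoint ℂ => sphDist x C) := by
  rw [OnePoint.continuous_iff]
  have hnorm : Tendsto (fun a : ℂ => ‖a‖) (coclosedCompact ℂ) atTop := by
    rw [Filter.coclosedCompact_eq_cocompact]
    exact tendsto_norm_cocompact_atTop
  constructor
  · cases C with
    | infty =>
      have := tendsto_aux0.comp hnorm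
      simpa [sphDist_coe_infty, sphDist_infty_infty, Function.comp_def] using this
    | coe c =>
      have hD : 0 < Real.sqrt (1 + ‖c‖ ^ 2) := sqrt_one_add_sq_pos _
      have hlo := (tendsto_aux2 (-(‖c‖)) _ hD).comp hnorm
      have hhi := (tendsto_aux2 (‖c‖) _ hD).comp hnorm
      rw [sphDist_infty_coe]
      refine tendsto_of_tendsto_of_tendsto_of_le_of_le hlo hhi ?_ ?_
      · intro a
        simp only [Function.comp_apply, sphDist_coe_coe]
        have h1 : ‖a‖ - ‖c‖ ≤ ‖a - c‖ := by
          exact norm_sub_norm_le a c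
        gcongr
        linarith
      · intro a
        simp only [Function.comp_apply, sphDist_coe_coe]
        have h1 : ‖a - c‖ ≤ ‖a‖ + ‖c‖ := by
          exact norm_sub_le a c
        gcongr
  · cases C with
    | infty =>
      apply Continuous.div continuous_const
      · exact Real.continuous_sqrt.comp (by continuity)
      · intro a; exact (sqrt_one_add_sq_pos _).ne'
    | coe c =>
      apply Continuous.div
      · exact continuous_const.mul (continuous_norm.comp (by continuity))
      · exact (Real.continuous_sqrt.comp (by continuity)).mul continuous_const
      · intro a
        exact (mul_pos (sqrt_one_add_sq_pos _) (sqrt_one_add_sq_pos _)).ne'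

/-- If `x` tends to `L` on the sphere and the spherical distance from `x` to `C` tends
to `0` along a nontrivial filter, then `L = C`. -/
lemma eq_of_tendsto_sphDist {α : Type*} {l : Filter α} [l.NeBot] {x : α → OnePoint ℂ}
    {L C : OnePoint ℂ} (h1 : Tendsto x l (𝓝 L))
    (h2 : Tendsto (fun a => sphDist (x a) C) l (𝓝 0)) : L = C := by
  have h3 : Tendsto (fun a => sphDist (x a) C) l (𝓝 (sphDist L C)) :=
    ((sphDist_continuous C).tendsto L).comp h1
  exact sphDist_eq_zero (tendsto_nhds_unique h3 h2)

/-- **Claim in the proof of the main theorem.** If `ψ 0, ψ 1, ψ 2` share `f` on the disc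
with common sharing set `A`, are continuous on the boundary and mutually distinct there,
`zₙ → z₀ ∈ ∂𝔻`, `ρₙ → 0`, and `f(zₙ + ρₙ z)` converges uniformly on compacta (spherical
metric) to a non-constant meromorphic `g` on `ℂ`, then for each fixed `z` only finitely
many terms `zₙ + ρₙ z` lie in `A`. -/
theorem finitely_many_terms_in_sharing_set
    (f : ℂ → ℂ) (ψ : Fin 3 → ℂ → ℂ) (Ψ : Fin 3 → ℂ → OnePoint ℂ) (A : Set ℂ)
    (hf : MeromorphicNiceOn f (ball (0 : ℂ) 1))
    (hψ : ∀ i, MeromorphicNiceOn (ψ i) (ball (0 : ℂ) 1))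
    (hΨc : ∀ i, ContinuousOn (Ψ i) (closedBall (0 : ℂ) 1))
    (hΨeq : ∀ i, ∀ z ∈ ball (0 : ℂ) 1, Ψ i z = sphv (ψ i) z)
    (hsep : ∀ z ∈ sphere (0 : ℂ) 1, ∀ i j : Fin 3, i ≠ j → Ψ i z ≠ Ψ j z)
    (hA : ∀ i : Fin 3, A = {z | z ∈ ball (0 : ℂ) 1 ∧ sphv (ψ i) z = sphv f z})
    (zn : ℕ → ℂ) (z₀ : ℂ)
    (hzn : ∀ n, zn n ∈ ball (0 : ℂ) 1)
    (hz₀ : z₀ ∈ sphere (0 : ℂ) 1)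
    (hlim : Tendsto zn atTop (𝓝 z₀))
    (ρn : ℕ → ℝ) (hρ : ∀ n, 0 < ρn n) (hρ0 : Tendsto ρn atTop (𝓝 0))
    (g : ℂ → ℂ) (hg : MeromorphicNiceOn g Set.univ)
    (hgnc : ¬ ∀ z w : ℂ, sphv g z = sphv g w)
    (hconv : ∀ K : Set ℂ, IsCompact K → ∀ ε > 0, ∀ᶠ n in atTop, ∀ z ∈ K,
      zn n + (ρn n : ℂ) * z ∈ ball (0 : ℂ) 1 ∧
      sphDist (sphv f (zn n + (ρn n : ℂ) * z)) (sphv g z) < ε) :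
    ∀ z : ℂ, {n : ℕ | zn n + (ρn n : ℂ) * z ∈ A}.Finite := by
  intro z
  by_contra hfin
  set pt : ℕ → ℂ := fun n => zn n + (ρn n : ℂ) * z with hptdef
  have hS : {n : ℕ | pt n ∈ A}.Infinite := hfin
  set l : Filter ℕ := atTop ⊓ 𝓟 {n : ℕ | pt n ∈ A} with hldef
  have hlne : l.NeBot := by
    rw [hldef, ← frequently_mem_iff_neBot, ← Nat.cofinite_eq_atTop]
    exact hS.frequently_cofinite
  -- convergence data for the single point z
  have hc : ∀ ε > 0, ∀ᶠ n in atTop, pt n ∈ ball (0 : ℂ) 1 ∧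
      sphDist (sphv f (pt n)) (sphv g z) < ε := by
    intro ε hε
    filter_upwards [hconv {z} isCompact_singleton ε hε] with n hn
    exact hn z rfl
  have hball : ∀ᶠ n in atTop, pt n ∈ ball (0 : ℂ) 1 := (hc 1 one_pos).mono fun n hn => hn.1
  have hd : Tendsto (fun n => sphDist (sphv f (pt n)) (sphv g z)) atTop (𝓝 0) := by
    rw [Metric.tendsto_nhds]
    intro ε hε
    filter_upwards [hc ε hε] with n hn
    rw [Real.dist_eq, sub_zero, _root_.abs_of_nonneg (sphDist_nonneg _ _)]
    exact hn.2
  -- pt n → z₀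
  have hptz : Tendsto pt atTop (𝓝 z₀) := by
    have h1 : Tendsto (fun n => ((ρn n : ℝ) : ℂ)) atTop (𝓝 0) := by
      have := (Complex.continuous_ofReal.tendsto 0).comp hρ0
      rwa [Complex.ofReal_zero] at this
    have := hlim.add (h1.mul_const z)
    simpa using this
  -- Ψ i (pt n) → Ψ i z₀ along l
  have hz₀' : z₀ ∈ closedBall (0 : ℂ) 1 := sphere_subset_closedBall hz₀
  have hΨlim : ∀ i : Fin 3, Tendsto (fun n => Ψ i (pt n)) l (𝓝 (Ψ i z₀)) := by
    intro i
    have hc1 : Tendsto (Ψ i) (𝓝[closedBall (0 : ℂ) 1] z₀) (𝓝 (Ψ i z₀)) := hΨc i z₀ hz₀'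
    have hptin : Tendsto pt l (𝓝[closedBall (0 : ℂ) 1] z₀) := by
      apply tendsto_nhdsWithin_of_tendsto_nhds_of_eventually_within _
        (hptz.mono_left inf_le_left)
      exact (hball.mono fun n hn => ball_subset_closedBall hn).filter_mono inf_le_left
    exact hc1.comp hptin
  -- on l, sphv f (pt n) = Ψ i (pt n)
  have hmem : ∀ᶠ n in l, pt n ∈ A := by
    rw [hldef, eventually_inf_principal]
    exact Eventually.of_forall fun n hn => hn
  have hEq : ∀ i : Fin 3, ∀ᶠ n in l, sphv f (pt n) = Ψ i (pt n) := by
    intro i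
    filter_upwards [hmem] with n hn
    have h1 : pt n ∈ {w | w ∈ ball (0 : ℂ) 1 ∧ sphv (ψ i) w = sphv f w} := (hA i) ▸ hn
    rw [hΨeq i (pt n) h1.1, h1.2]
  have hd' : ∀ i : Fin 3, Tendsto (fun n => sphDist (Ψ i (pt n)) (sphv g z)) l (𝓝 0) := by
    intro i
    refine (hd.mono_left inf_le_left).congr' ?_
    filter_upwards [hEq i] with n hn
    rw [hn]
  have key : ∀ i : Fin 3, Ψ i z₀ = sphv g z := fun i =>
    eq_of_tendsto_sphDist (hΨlim i) (hd' i)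
  exact hsep z₀ hz₀ 0 1 (by decide) ((key 0).trans (key 1).symm)

end
end

section
/- Let f and ψ be meromorphic functions in the unit disc 𝔻, with ψ continuous on ∂𝔻. Let zₙ ∈ 𝔻 with zₙ → z₀ ∈ ∂𝔻, let ρₙ > 0 with ρₙ → 0, and suppose gₙ(z) = f(zₙ + ρₙ·z) converges uniformly on each compact subset of ℂ (with respect to the spherical metric on the Riemann sphere ℂ ∪ {∞}) to a non-constant meromorphic function g on ℂ. If there exists N ∈ ℕ such that for all n > N and all z ∈ ℂ with zₙ + ρₙ·z ∈ 𝔻 one has f(zₙ + ρₙ·z) ≠ ψ(zₙ + ρₙ·z) (as values in the Riemann sphere), then g(z) ≠ ψ(z₀) for every z ∈ ℂ, where ψ(z₀) denotes the value at z₀ of the continuous extension of ψ to the closed unit disc. -/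
open Complex Filter Topology Metric Set
open scoped OnePoint Classical

noncomputable section

/-! ### Auxiliary lemmas -/

lemma sphv_coe {f : ℂ → ℂ} {z b : ℂ} : sphv f z = (b : OnePoint ℂ) ↔ AnalyticAt ℂ f z ∧ f z = b := by
  unfold sphv
  split_ifs with h
  · constructor
    · intro hh; exact ⟨h, OnePoint.coe_injective hh⟩
    · rintro ⟨-, rfl⟩; rfl
  · constructor
    · intro hh; exact absurd hh.symm (OnePoint.coe_ne_infty b)
    · rintro ⟨hh, -⟩; exact absurd hh h

lemma sphv_infty {f : ℂ → ℂ} {z : ℂ} : sphv f z = ∞ ↔ ¬ AnalyticAt ℂ f z := by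
  unfold sphv
  split_ifs with h
  · simp only [iff_false, h, not_true_eq_false]
    exact fun hh => OnePoint.coe_ne_infty _ hh
  · simp [h]

lemma sqrt_pos' (a : ℂ) : 0 < Real.sqrt (1 + ‖a‖ ^ 2) := by
  apply Real.sqrt_pos.2; positivity

lemma sqrt_le_of_le {a : ℂ} {M : ℝ} (hM : 1 ≤ M) (h : ‖a‖ ≤ M) :
    Real.sqrt (1 + ‖a‖ ^ 2) ≤ 2 * M := by
  rw [show 2*M = Real.sqrt ((2*M)^2) from (Real.sqrt_sq (by linarith)).symm]
  apply Real.sqrt_le_sqrt; nlinarith [norm_nonneg a]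

lemma abs_sub_eq' (a b : ℂ) : ‖a - b‖ =
    sphDist (a : OnePoint ℂ) b * (Real.sqrt (1 + ‖a‖ ^ 2) * Real.sqrt (1 + ‖b‖ ^ 2)) / 2 := by
  rw [sphDist_coe_coe]
  have ha := sqrt_pos' a; have hb := sqrt_pos' b
  field_simp

/-- chordal closeness to a bounded finite point forces finiteness and euclidean closeness -/
lemma close_of_sphDist_lt {x : OnePoint ℂ} {v : ℂ} {M : ℝ} (hM : 1 ≤ M)
    (hv : ‖v‖ ≤ M) (hd : sphDist x ↑v < 1/(3*M)) :
    ∃ u : ℂ, x = (u : OnePoint ℂ) ∧ ‖u - v‖ ≤ 6 * M^2 * sphDist x ↑v := by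
  have hM0 : (0:ℝ) < M := by linarith
  cases x with
  | infty =>
      exfalso
      have h1 : sphDist ∞ (v : OnePoint ℂ) = 2 / Real.sqrt (1 + ‖v‖ ^ 2) := rfl
      have h2 := sqrt_le_of_le hM hv
      have h3 := sqrt_pos' v
      have : 1/M ≤ 2 / Real.sqrt (1 + ‖v‖ ^ 2) := by
        rw [div_le_div_iff₀ hM0 h3]; linarith
      rw [h1] at hd
      have h5 : (1:ℝ)/M < 1/(3*M) := lt_of_le_of_lt this hd
      rw [div_lt_div_iff₀ hM0 (by linarith : (0:ℝ) < 3*M)] at h5; linarith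
  | coe u =>
      refine ⟨u, rfl, ?_⟩
      have hd' : sphDist (u : OnePoint ℂ) v < 1/(3*M) := hd
      have hune : ‖u‖ ≤ 3 * M := by
        by_contra hu
        push_neg at hu
        have h1 : (1:ℝ) ≤ ‖u‖ := by linarith
        have hSu : Real.sqrt (1 + ‖u‖ ^ 2) ≤ 2 * ‖u‖ := by
          rw [show 2*‖u‖ = Real.sqrt ((2*‖u‖)^2) from
            (Real.sqrt_sq (by linarith)).symm]
          apply Real.sqrt_le_sqrt; nlinarith
        have hSv := sqrt_le_of_le hM hv
        have huv : ‖u‖ - M ≤ ‖u - v‖ := by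
          have := norm_sub_norm_le u v
          linarith
        have hlow : 1/(3*M) ≤ sphDist (u : OnePoint ℂ) v := by
          rw [sphDist_coe_coe]
          have h3 := sqrt_pos' u; have h4 := sqrt_pos' v
          rw [div_le_div_iff₀ (by linarith) (by positivity)]
          have e1 : Real.sqrt (1 + ‖u‖ ^ 2) * Real.sqrt (1 + ‖v‖ ^ 2)
              ≤ 4 * M * ‖u‖ := by nlinarith
          nlinarith
        linarith
      rw [abs_sub_eq' u v]
      have h3 := sqrt_pos' u; have h4 := sqrt_pos' v
      have hSu : Real.sqrt (1 + ‖u‖ ^ 2) ≤ 2 * (3*M) :=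
        sqrt_le_of_le (by linarith) hune
      have hSv := sqrt_le_of_le hM hv
      have hd0 : 0 ≤ sphDist (u : OnePoint ℂ) v := by
        rw [sphDist_coe_coe]; positivity
      have hprod : Real.sqrt (1 + ‖u‖ ^ 2) * Real.sqrt (1 + ‖v‖ ^ 2)
          ≤ 12 * M^2 := by nlinarith
      nlinarith [mul_le_mul_of_nonneg_left hprod hd0]

lemma close_infty_of_sphDist_lt {x : OnePoint ℂ} {ε : ℝ} (hε0 : 0 < ε) (hε : ε ≤ 1)
    (hd : sphDist x ∞ < ε) : x = ∞ ∨ ∃ u : ℂ, x = (u : OnePoint ℂ) ∧ 1/ε < ‖u‖ := by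
  cases x with
  | infty => exact Or.inl rfl
  | coe u =>
      refine Or.inr ⟨u, rfl, ?_⟩
      have hd' : 2 / Real.sqrt (1 + ‖u‖ ^ 2) < ε := hd
      have h3 := sqrt_pos' u
      have hSu : Real.sqrt (1 + ‖u‖ ^ 2) ≤ 1 + ‖u‖ := by
        rw [show 1 + ‖u‖ = Real.sqrt ((1 + ‖u‖)^2) from
          (Real.sqrt_sq (by positivity)).symm]
        apply Real.sqrt_le_sqrt; nlinarith [norm_nonneg u]
      rw [div_lt_iff₀ h3] at hd'
      have h4 : 2 < ε * (1 + ‖u‖) := by nlinarith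
      rw [div_lt_iff₀ hε0]
      nlinarith [norm_nonneg u]

lemma one_le_sphDist_zero {y : OnePoint ℂ}
    (h : y = ∞ ∨ ∃ v : ℂ, y = (v : OnePoint ℂ) ∧ 1 ≤ ‖v‖) :
    1 ≤ sphDist ((0:ℂ) : OnePoint ℂ) y := by
  rcases h with h | ⟨v, rfl, hv⟩
  · subst h
    have : sphDist ((0:ℂ) : OnePoint ℂ) ∞ = 2 / Real.sqrt (1 + ‖(0:ℂ)‖ ^ 2) := rfl
    rw [this]; norm_num
  · rw [sphDist_coe_coe]
    have h4 := sqrt_pos' v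
    have hSv : Real.sqrt (1 + ‖v‖ ^ 2) ≤ 2 * ‖v‖ := sqrt_le_of_le hv le_rfl
    have : ‖0 - v‖ = ‖v‖ := by simp
    rw [this]
    have hS0 : Real.sqrt (1 + ‖(0:ℂ)‖ ^ 2) = 1 := by simp
    rw [hS0, one_le_div (by positivity)]
    nlinarith

lemma sqrt_inv_eq {a : ℂ} (ha : a ≠ 0) : Real.sqrt (1 + ‖a⁻¹‖ ^ 2) =
    Real.sqrt (1 + ‖a‖ ^ 2) / ‖a‖ := by
  have hA : 0 < ‖a‖ := by simpa [norm_pos_iff] using ha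
  have h1 : (1 + ‖a⁻¹‖ ^ 2) = (1 + ‖a‖ ^ 2) / ‖a‖ ^ 2 := by
    rw [norm_inv]; field_simp; ring
  rw [h1, Real.sqrt_div (by positivity), Real.sqrt_sq hA.le]

lemma sphDist_inv_inv {a b : ℂ} (ha : a ≠ 0) (hb : b ≠ 0) :
    sphDist (↑a⁻¹ : OnePoint ℂ) ↑b⁻¹ = sphDist (↑a : OnePoint ℂ) ↑b := by
  have hA : 0 < ‖a‖ := by simpa [norm_pos_iff] using ha
  have hB : 0 < ‖b‖ := by simpa [norm_pos_iff] using hb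
  rw [sphDist_coe_coe, sphDist_coe_coe, sqrt_inv_eq ha, sqrt_inv_eq hb]
  have hnum : ‖a⁻¹ - b⁻¹‖ = ‖a - b‖ / (‖a‖ * ‖b‖) := by
    rw [inv_sub_inv ha hb, norm_div, norm_mul]
    rw [show (b - a) = -(a - b) by ring, norm_neg]
  rw [hnum]
  have h3 := sqrt_pos' a; have h4 := sqrt_pos' b
  field_simp
  try ring

lemma pole_large {f : ℂ → ℂ} {u : ℂ} (hp : Tendsto f (𝓝[≠] u) (cocompact ℂ)) (C : ℝ) :
    ∀ᶠ x in 𝓝[≠] u, C < ‖f x‖ := by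
  have h1 : (closedBall (0:ℂ) C)ᶜ ∈ cocompact ℂ :=
    Filter.mem_cocompact.mpr ⟨closedBall 0 C, isCompact_closedBall _ _, Subset.rfl⟩
  filter_upwards [hp h1] with x hx
  rw [Set.mem_preimage, Set.mem_compl_iff, Metric.mem_closedBall, not_le, Complex.dist_eq,
    sub_zero] at hx
  exact hx

lemma pole_inv_analytic {f : ℂ → ℂ} {u : ℂ} (hm : MeromorphicAt f u)
    (hp : Tendsto f (𝓝[≠] u) (cocompact ℂ)) :
    ∃ φ : ℂ → ℂ, AnalyticAt ℂ φ u ∧ φ u = 0 ∧ ∀ᶠ x in 𝓝[≠] u, φ x = (f x)⁻¹ := by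
  by_cases htop : meromorphicOrderAt f u = ⊤
  · exfalso
    have hz := meromorphicOrderAt_eq_top_iff.mp htop
    obtain ⟨x, hx1, hx2⟩ := (hz.and (pole_large hp 1)).exists
    rw [hx1] at hx2; simp at hx2; linarith
  · obtain ⟨m, hmm⟩ := WithTop.ne_top_iff_exists.mp htop
    obtain ⟨h, hh_an, hh_ne, heq⟩ := (meromorphicOrderAt_eq_int_iff (n := m) hm).mp hmm.symm
    by_cases h0m : 0 ≤ m
    · exfalso
      obtain ⟨n, rfl⟩ := Int.eq_ofNat_of_zero_le h0m
      have hbd : ∀ᶠ z in 𝓝[≠] u, ‖f z‖ ≤ ‖h u‖ + 1 := by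
        have hcont : ∀ᶠ z in 𝓝[≠] u, ‖h z‖ < ‖h u‖ + 1 := by
          apply Filter.Eventually.filter_mono nhdsWithin_le_nhds
          have ht : Tendsto (fun z => ‖h z‖) (𝓝 u) (𝓝 (‖h u‖)) :=
            (continuous_norm.tendsto _).comp hh_an.continuousAt
          exact ht.eventually_lt_const (by linarith)
        have hsmall : ∀ᶠ z in 𝓝[≠] u, ‖z - u‖ ≤ 1 := by
          apply Filter.Eventually.filter_mono nhdsWithin_le_nhds
          have ht : Tendsto (fun z : ℂ => ‖z - u‖) (𝓝 u) (𝓝 (‖u - u‖)) :=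
            (continuous_norm.tendsto _).comp (continuous_id.sub continuous_const).continuousAt
          simp only [sub_self, norm_zero] at ht
          exact (ht.eventually_lt_const (by norm_num)).mono fun z hz => hz.le
        filter_upwards [heq, hcont, hsmall] with z h1 h2 h3
        rw [h1, smul_eq_mul, norm_mul, zpow_natCast, norm_pow]
        have h4 : ‖z - u‖ ^ n ≤ 1 := pow_le_one₀ (norm_nonneg _) h3
        nlinarith [norm_nonneg (h z), pow_nonneg (norm_nonneg (z - u)) n]
      obtain ⟨x, hx1, hx2⟩ := (hbd.and (pole_large hp (‖h u‖ + 1))).exists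
      linarith
    · push_neg at h0m
      set k : ℕ := (-m).toNat with hk
      have hkm : (k : ℤ) = -m := Int.toNat_of_nonneg (by linarith)
      have hk1 : 1 ≤ k := by omega
      refine ⟨fun x => (x - u)^k * (h x)⁻¹, ?_, ?_, ?_⟩
      · exact ((analyticAt_id.sub analyticAt_const).pow k).mul (hh_an.inv hh_ne)
      · simp [sub_self, zero_pow (by omega : k ≠ 0)]
      · have hne : ∀ᶠ x in 𝓝[≠] u, h x ≠ 0 :=
          (hh_an.continuousAt.eventually_ne hh_ne).filter_mono nhdsWithin_le_nhds
        filter_upwards [heq, hne, self_mem_nhdsWithin] with x hx hhx hxu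
        have hxu' : x - u ≠ 0 := sub_ne_zero.mpr hxu
        rw [hx, smul_eq_mul, mul_inv, ← zpow_neg, ← hkm, zpow_natCast]

lemma invf_analytic_of_ne {f : ℂ → ℂ} {u : ℂ} (hf : AnalyticAt ℂ f u) (hne : f u ≠ 0) :
    AnalyticAt ℂ (fun x => if AnalyticAt ℂ f x then (f x)⁻¹ else 0) u := by
  have h1 : ∀ᶠ x in 𝓝 u, AnalyticAt ℂ f x := hf.eventually_analyticAt
  exact (hf.inv hne).congr (h1.mono fun x hx => (if_pos hx).symm)

lemma invf_analytic_of_pole {f : ℂ → ℂ} {u : ℂ} (hm : MeromorphicAt f u)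
    (hna : ¬ AnalyticAt ℂ f u) (hp : Tendsto f (𝓝[≠] u) (cocompact ℂ)) :
    AnalyticAt ℂ (fun x => if AnalyticAt ℂ f x then (f x)⁻¹ else 0) u := by
  obtain ⟨φ, hφ, hφ0, hφeq⟩ := pole_inv_analytic hm hp
  apply hφ.congr
  have h1 := eventually_nhdsWithin_iff.mp (hm.eventually_analyticAt.and hφeq)
  filter_upwards [h1] with x hx
  by_cases hxu : x = u
  · subst hxu; simp [if_neg hna, hφ0]
  · obtain ⟨ha, he⟩ := hx (Set.mem_compl_singleton_iff.mpr hxu)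
    simp [if_pos ha, he]

lemma hurwitz_contra {F : ℂ → ℂ} {z : ℂ} {r δ : ℝ} (hr : 0 < r) (hδ : 0 < δ)
    (hF : ∀ w ∈ closedBall z r, AnalyticAt ℂ F w)
    (hne : ∀ w ∈ closedBall z r, F w ≠ 0)
    (hbig : ∀ w ∈ sphere z r, δ ≤ ‖F w‖) :
    δ ≤ ‖F z‖ := by
  set G : ℂ → ℂ := fun w => (F w)⁻¹ with hG
  have hGan : ∀ w ∈ closedBall z r, AnalyticAt ℂ G w := fun w hw =>
    (hF w hw).inv (hne w hw)
  have hcl : closure (ball z r) = closedBall z r := closure_ball z (ne_of_gt hr)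
  have hd : DiffContOnCl ℂ G (ball z r) := by
    constructor
    · exact fun w hw => ((hGan w (ball_subset_closedBall hw)).differentiableAt).differentiableWithinAt
    · rw [hcl]; exact fun w hw => ((hGan w hw).continuousAt).continuousWithinAt
  have hfr : ∀ w ∈ frontier (ball z r), ‖G w‖ ≤ 1/δ := by
    rw [frontier_ball z (ne_of_gt hr)]
    intro w hw
    have h1 := hbig w hw
    have h2 : F w ≠ 0 := hne w (sphere_subset_closedBall hw)
    rw [hG]
    simp only [norm_inv]
    rw [inv_le_comm₀ (by simpa [norm_pos_iff] using h2) (by positivity), one_div, inv_inv]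
    exact h1
  have hz : z ∈ closure (ball z r) := by rw [hcl]; exact mem_closedBall_self hr.le
  have := Complex.norm_le_of_forall_mem_frontier_norm_le isBounded_ball hd hfr hz
  have hFz : F z ≠ 0 := hne z (mem_closedBall_self hr.le)
  have hFzpos : 0 < ‖F z‖ := by simpa [norm_pos_iff] using hFz
  rw [hG] at this
  simp only [norm_inv] at this
  rw [inv_le_comm₀ hFzpos (by positivity)] at this
  calc δ = (1/δ)⁻¹ := by rw [one_div, inv_inv]
  _ ≤ _ := this

lemma const_of_locally_const {g : ℂ → ℂ}
    (hg2 : ∀ z : ℂ, AnalyticAt ℂ g z ∨ Tendsto g (𝓝[≠] z) (cocompact ℂ))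
    {z a : ℂ} (h : ∀ᶠ w in 𝓝 z, g w = a) :
    ∀ w : ℂ, AnalyticAt ℂ g w ∧ g w = a := by
  set S := {w : ℂ | ∀ᶠ u in 𝓝 w, g u = a} with hS
  have hSopen : IsOpen S := isOpen_setOf_eventually_nhds
  have hSclosed : IsClosed S := by
    rw [← closure_subset_iff_isClosed]
    intro p hp
    have key : ∀ T ∈ 𝓝 p, (∀ u ∈ T, u ≠ p → g u ≠ a) → p ∈ S := by
      intro T hT hTa
      obtain ⟨q, hq1, hq2⟩ := mem_closure_iff_nhds.mp hp T hT
      by_cases hqp : q = p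
      · subst hqp; exact hq2
      · exact absurd (hq2.self_of_nhds) (hTa q hq1 hqp)
    rcases hg2 p with hA | hP
    · rcases (hA.sub analyticAt_const).eventually_eq_zero_or_eventually_ne_zero with hz | hnz
      · have : ∀ᶠ u in 𝓝 p, g u = a := by
          filter_upwards [hz] with u hu
          have h2 : g u - a = 0 := hu
          exact sub_eq_zero.mp h2
        exact this
      · have hnz' := eventually_nhdsWithin_iff.mp hnz
        obtain ⟨T, hT1, hT2⟩ := hnz'.exists_mem
        exact key T hT1 fun u hu hup => by
          have := hT2 u hu (Set.mem_compl_singleton_iff.mpr hup)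
          intro hgu
          exact this (by rw [Pi.sub_apply, hgu, sub_self])
    · have hbig := eventually_nhdsWithin_iff.mp (pole_large hP (‖a‖))
      obtain ⟨T, hT1, hT2⟩ := hbig.exists_mem
      apply key T hT1
      intro u hu hup hgu
      have := hT2 u hu (Set.mem_compl_singleton_iff.mpr hup)
      rw [hgu] at this
      exact lt_irrefl _ this
  have huniv : S = univ := IsClopen.eq_univ ⟨hSclosed, hSopen⟩ ⟨z, h⟩
  intro w
  have hw : w ∈ S := huniv ▸ mem_univ w
  have hev : (fun _ : ℂ => a) =ᶠ[𝓝 w] g := hw.mono fun u hu => hu.symm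
  exact ⟨(analyticAt_const (v := a)).congr hev, hw.self_of_nhds⟩

lemma psi_near_finite {Ψ : ℂ → OnePoint ℂ} {z₀ a : ℂ}
    (hc : ContinuousWithinAt Ψ (closedBall (0:ℂ) 1) z₀) (hv : Ψ z₀ = (a : OnePoint ℂ))
    {ε : ℝ} (hε : 0 < ε) :
    ∃ θ > 0, ∀ u ∈ closedBall (0:ℂ) 1, dist u z₀ < θ →
      ∃ b : ℂ, Ψ u = (b : OnePoint ℂ) ∧ ‖b - a‖ < ε := by
  have hV : ((↑) '' (ball a ε) : Set (OnePoint ℂ)) ∈ 𝓝 (a : OnePoint ℂ) := by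
    rw [OnePoint.nhds_coe_eq]
    exact Filter.image_mem_map (Metric.ball_mem_nhds a hε)
  have h2 : Ψ ⁻¹' ((↑) '' (ball a ε)) ∈ 𝓝[closedBall (0:ℂ) 1] z₀ := by
    apply hc
    rw [hv]; exact hV
  obtain ⟨O, hOopen, hOz, hsub⟩ := mem_nhdsWithin.mp h2
  obtain ⟨θ, hθ, hball⟩ := Metric.isOpen_iff.mp hOopen z₀ hOz
  refine ⟨θ, hθ, fun u hu hd => ?_⟩
  have : u ∈ O ∩ closedBall (0:ℂ) 1 := ⟨hball (mem_ball.mpr hd), hu⟩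
  obtain ⟨b, hb, heq⟩ := hsub this
  exact ⟨b, heq.symm, by rwa [← Complex.dist_eq, ← mem_ball]⟩

lemma psi_near_infty {Ψ : ℂ → OnePoint ℂ} {z₀ : ℂ}
    (hc : ContinuousWithinAt Ψ (closedBall (0:ℂ) 1) z₀) (hv : Ψ z₀ = ∞) {M : ℝ} (hM : 0 ≤ M) :
    ∃ θ > 0, ∀ u ∈ closedBall (0:ℂ) 1, dist u z₀ < θ →
      Ψ u = ∞ ∨ ∃ b : ℂ, Ψ u = (b : OnePoint ℂ) ∧ M < ‖b‖ := by
  set V : Set (OnePoint ℂ) := {∞} ∪ (↑) '' {v : ℂ | M < ‖v‖} with hVdef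
  have hpre : ((↑) ⁻¹' V : Set ℂ) = {v : ℂ | M < ‖v‖} := by
    ext v
    simp only [hVdef, Set.mem_preimage, Set.mem_union, Set.mem_singleton_iff,
      Set.mem_image, Set.mem_setOf_eq]
    constructor
    · rintro (h | ⟨b, hb, heq⟩)
      · exact absurd h (OnePoint.coe_ne_infty v)
      · rwa [← OnePoint.coe_injective heq]
    · intro h; exact Or.inr ⟨v, h, rfl⟩
  have hcompl : ({v : ℂ | M < ‖v‖})ᶜ = closedBall (0:ℂ) M := by
    ext v
    simp only [Set.mem_compl_iff, Set.mem_setOf_eq, not_lt, mem_closedBall, Complex.dist_eq,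
      sub_zero]
  have hmemV : (∞ : OnePoint ℂ) ∈ V := Set.mem_union_left _ (Set.mem_singleton _)
  have hVopen : IsOpen V := by
    rw [OnePoint.isOpen_iff_of_mem hmemV, hpre, hcompl]
    exact ⟨isClosed_closedBall, isCompact_closedBall _ _⟩
  have hV : V ∈ 𝓝 (∞ : OnePoint ℂ) := hVopen.mem_nhds hmemV
  have h2 : Ψ ⁻¹' V ∈ 𝓝[closedBall (0:ℂ) 1] z₀ := by
    apply hc; rw [hv]; exact hV
  obtain ⟨O, hOopen, hOz, hsub⟩ := mem_nhdsWithin.mp h2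
  obtain ⟨θ, hθ, hball⟩ := Metric.isOpen_iff.mp hOopen z₀ hOz
  refine ⟨θ, hθ, fun u hu hd => ?_⟩
  have hmem : u ∈ O ∩ closedBall (0:ℂ) 1 := ⟨hball (mem_ball.mpr hd), hu⟩
  have := hsub hmem
  rw [hVdef] at this
  rcases this with h | ⟨b, hb, heq⟩
  · exact Or.inl h
  · exact Or.inr ⟨b, heq.symm, hb⟩

lemma abs_add3 (x y w : ℂ) :
    ‖x + y + w‖ ≤ ‖x‖ + ‖y‖ + ‖w‖ := by
  calc ‖x + y + w‖ ≤ ‖x + y‖ + ‖w‖ := norm_add_le _ _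
  _ ≤ _ := by linarith [norm_add_le x y]

lemma abs_sub_le'' (x y : ℂ) : ‖x - y‖ ≤ ‖x‖ + ‖y‖ := by
  rw [sub_eq_add_neg]
  calc ‖x + -y‖ ≤ ‖x‖ + ‖-y‖ := norm_add_le _ _
  _ = _ := by rw [norm_neg]

lemma inv_lt_of_one_div_lt {a b : ℝ} (ha : 0 < a) (h : 1/a < b) : b⁻¹ < a := by
  have h1a : 0 < 1/a := by positivity
  have hb : 0 < b := lt_trans h1a h
  have h2 : b⁻¹ < (1/a)⁻¹ := by
    rw [inv_lt_inv₀ hb h1a] at *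
    exact h
  rwa [one_div, inv_inv] at h2

lemma affine_unif {zn : ℕ → ℂ} {z₀ : ℂ} (hlim : Tendsto zn atTop (𝓝 z₀))
    {ρn : ℕ → ℝ} (hρ : ∀ n, 0 < ρn n) (hρ0 : Tendsto ρn atTop (𝓝 0))
    {θ R : ℝ} (hθ : 0 < θ) (hR : 0 ≤ R) :
    ∀ᶠ n in atTop, ∀ w : ℂ, ‖w‖ ≤ R →
      dist (zn n + (ρn n : ℂ) * w) z₀ < θ := by
  have hz2 : ∀ᶠ n in atTop, dist (zn n) z₀ < θ/2 :=
    Metric.tendsto_nhds.mp hlim (θ/2) (by linarith)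
  have hz3 : ∀ᶠ n in atTop, ρn n < θ/(2*(R+1)) := by
    have h := Metric.tendsto_nhds.mp hρ0 (θ/(2*(R+1))) (by positivity)
    filter_upwards [h] with n hn
    rwa [Real.dist_eq, sub_zero, abs_of_pos (hρ n)] at hn
  filter_upwards [hz2, hz3] with n h1 h2
  intro w hw
  have hd1 : dist (zn n + (ρn n : ℂ) * w) (zn n) = ρn n * ‖w‖ := by
    rw [Complex.dist_eq, show zn n + (ρn n : ℂ) * w - zn n = (ρn n : ℂ) * w by ring,
      norm_mul, Complex.norm_real, Real.norm_eq_abs, abs_of_pos (hρ n)]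
  have hd2 : ρn n * ‖w‖ < θ/2 := by
    have h3 : ρn n * ‖w‖ ≤ ρn n * R :=
      mul_le_mul_of_nonneg_left hw (hρ n).le
    have h4 : ρn n * R < θ/2 := by
      have h5 : ρn n * R ≤ ρn n * (R+1) := by nlinarith [(hρ n).le]
      have h6 : ρn n * (R+1) < (θ/(2*(R+1))) * (R+1) := by
        apply mul_lt_mul_of_pos_right h2; linarith
      have h7 : (θ/(2*(R+1))) * (R+1) = θ/2 := by field_simp
      linarith
    linarith
  calc dist (zn n + (ρn n : ℂ) * w) z₀
      ≤ dist (zn n + (ρn n : ℂ) * w) (zn n) + dist (zn n) z₀ := dist_triangle _ _ _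
  _ < θ := by rw [hd1]; linarith

/-- **Hurwitz step.** If the rescaled functions `f(zₙ + ρₙ z)` converge uniformly on
compacta (spherical metric) to a non-constant meromorphic `g` on `ℂ`, with `zₙ → z₀ ∈ ∂𝔻`
and `ρₙ → 0`, and if eventually `f ≠ ψ` along the rescaled points, then the limit `g`
omits the boundary value `Ψ z₀` of the continuous extension of `ψ`. -/
theorem limit_omits_boundary_value
    (f ψ : ℂ → ℂ) (Ψ : ℂ → OnePoint ℂ)
    (hf : MeromorphicNiceOn f (ball (0 : ℂ) 1))
    (hψ : MeromorphicNiceOn ψ (ball (0 : ℂ) 1))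
    (hΨc : ContinuousOn Ψ (closedBall (0 : ℂ) 1))
    (hΨeq : ∀ z ∈ ball (0 : ℂ) 1, Ψ z = sphv ψ z)
    (zn : ℕ → ℂ) (z₀ : ℂ)
    (hzn : ∀ n, zn n ∈ ball (0 : ℂ) 1)
    (hz₀ : z₀ ∈ sphere (0 : ℂ) 1)
    (hlim : Tendsto zn atTop (𝓝 z₀))
    (ρn : ℕ → ℝ) (hρ : ∀ n, 0 < ρn n) (hρ0 : Tendsto ρn atTop (𝓝 0))
    (g : ℂ → ℂ) (hg : MeromorphicNiceOn g Set.univ)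
    (hgnc : ¬ ∀ z w : ℂ, sphv g z = sphv g w)
    (hconv : ∀ K : Set ℂ, IsCompact K → ∀ ε > 0, ∀ᶠ n in atTop, ∀ z ∈ K,
      zn n + (ρn n : ℂ) * z ∈ ball (0 : ℂ) 1 ∧
      sphDist (sphv f (zn n + (ρn n : ℂ) * z)) (sphv g z) < ε)
    (havoid : ∃ N : ℕ, ∀ n > N, ∀ z : ℂ, zn n + (ρn n : ℂ) * z ∈ ball (0 : ℂ) 1 →
      sphv f (zn n + (ρn n : ℂ) * z) ≠ sphv ψ (zn n + (ρn n : ℂ) * z)) :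
    ∀ z : ℂ, sphv g z ≠ Ψ z₀ := by
  intro z heq
  obtain ⟨N, hN⟩ := havoid
  have hz₀cb : z₀ ∈ closedBall (0:ℂ) 1 := by
    rw [mem_closedBall]
    rw [mem_sphere] at hz₀
    exact le_of_eq hz₀
  have hΨcw : ContinuousWithinAt Ψ (closedBall (0:ℂ) 1) z₀ := hΨc z₀ hz₀cb
  cases hΨv : Ψ z₀ with
  | coe a =>
    rw [hΨv] at heq
    obtain ⟨hgan, hgz⟩ := sphv_coe.mp heq
    rcases (hgan.sub analyticAt_const).eventually_eq_zero_or_eventually_ne_zero with hz0 | hz1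
    · -- g locally constant : contradict hgnc
      have hloc : ∀ᶠ w in 𝓝 z, g w = a := by
        filter_upwards [hz0] with w hw
        have h2 : g w - a = 0 := hw
        exact sub_eq_zero.mp h2
      have hall := const_of_locally_const (fun p => hg.2 p (mem_univ p)) hloc
      apply hgnc
      intro z' w'
      have hc : ∀ p : ℂ, sphv g p = (a : OnePoint ℂ) := fun p => sphv_coe.mpr (hall p)
      rw [hc z', hc w']
    · -- choose the radius
      have hEv : ∀ᶠ y in 𝓝 z, AnalyticAt ℂ g y ∧ (y ≠ z → g y ≠ a) := by
        have e2 := eventually_nhdsWithin_iff.mp hz1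
        filter_upwards [hgan.eventually_analyticAt, e2] with y h1 h2
        refine ⟨h1, fun hy hgy => ?_⟩
        have h3 := h2 (Set.mem_compl_singleton_iff.mpr hy)
        exact h3 (by rw [Pi.sub_apply, hgy, sub_self])
      obtain ⟨t, ht, htP⟩ := Metric.eventually_nhds_iff.mp hEv
      set r := t/2 with hrdef
      have hr : 0 < r := by positivity
      have hKsub : ∀ w ∈ closedBall z r, AnalyticAt ℂ g w ∧ (w ≠ z → g w ≠ a) := by
        intro w hw
        rw [mem_closedBall] at hw
        exact htP (by rw [hrdef] at hw; linarith)
      -- the minimum δ on the circle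
      have hsne : (sphere z r).Nonempty := NormedSpace.sphere_nonempty.mpr hr.le
      have hgc : ContinuousOn (fun w => ‖g w - a‖) (sphere z r) := by
        intro w hw
        exact (continuous_norm.continuousAt.comp
          ((hKsub w (sphere_subset_closedBall hw)).1.continuousAt.sub
            continuousAt_const)).continuousWithinAt
      obtain ⟨w₀, hw₀, hw₀min⟩ := (isCompact_sphere z r).exists_isMinOn hsne hgc
      set δ := ‖g w₀ - a‖ with hδdef
      have hw₀ne : w₀ ≠ z := by
        intro h
        rw [mem_sphere, h, dist_self] at hw₀
        exact absurd hw₀.symm (ne_of_gt hr)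
      have hδ : 0 < δ := by
        rw [hδdef, norm_pos_iff]
        exact sub_ne_zero.mpr ((hKsub w₀ (sphere_subset_closedBall hw₀)).2 hw₀ne)
      -- the bound M on the closed disc
      obtain ⟨C, hC⟩ := (isCompact_closedBall z r).exists_bound_of_continuousOn
        (fun w hw => ((hKsub w hw).1.continuousAt).continuousWithinAt)
      set M := max C 1 with hMdef
      have hM1 : (1:ℝ) ≤ M := le_max_right _ _
      have hM0 : (0:ℝ) < M := by linarith
      have hgM : ∀ w ∈ closedBall z r, ‖g w‖ ≤ M := fun w hw =>
        le_trans (by simpa using hC w hw) (le_max_left _ _)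
      -- choose ε
      set εf := min (1/(3*M)) (δ/(24*M^2)) with hεfdef
      have hεf0 : 0 < εf := lt_min (by positivity) (by positivity)
      have hεf1 : εf ≤ 1/(3*M) := min_le_left _ _
      have hεf2 : εf ≤ δ/(24*M^2) := min_le_right _ _
      obtain ⟨θ, hθ, hθP⟩ := psi_near_finite hΨcw hΨv (show (0:ℝ) < δ/4 by linarith)
      set R := ‖z‖ + r with hRdef
      have hR0 : (0:ℝ) ≤ R := by positivity
      obtain ⟨n, ⟨hnA, hnB⟩, hnN⟩ :=
        (((hconv (closedBall z r) (isCompact_closedBall z r) εf hεf0).and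
          (affine_unif hlim hρ hρ0 hθ hR0)).and (eventually_gt_atTop N)).exists
      set L : ℂ → ℂ := fun x => zn n + (ρn n : ℂ) * x with hLdef
      have hwR : ∀ w ∈ closedBall z r, ‖w‖ ≤ R := by
        intro w hw
        rw [mem_closedBall, Complex.dist_eq] at hw
        calc ‖w‖ = ‖z + (w - z)‖ := by ring_nf
        _ ≤ ‖z‖ + ‖w - z‖ := norm_add_le _ _
        _ ≤ R := by rw [hRdef]; linarith
      have key : ∀ w ∈ closedBall z r,
          (AnalyticAt ℂ f (L w) ∧ ‖f (L w) - g w‖ < δ/4) ∧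
          (AnalyticAt ℂ ψ (L w) ∧ ‖ψ (L w) - a‖ < δ/4) ∧
          L w ∈ ball (0:ℂ) 1 := by
        intro w hw
        obtain ⟨hball, hdist⟩ := hnA w hw
        have hgw : sphv g w = ((g w : ℂ) : OnePoint ℂ) := sphv_coe.mpr ⟨(hKsub w hw).1, rfl⟩
        rw [hgw] at hdist
        have h6 : sphDist (sphv f (L w)) ((g w : ℂ) : OnePoint ℂ) < 1/(3*M) :=
          lt_of_lt_of_le hdist hεf1
        obtain ⟨v, hv, hvb⟩ := close_of_sphDist_lt hM1 (hgM w hw) h6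
        obtain ⟨hfan, hfval⟩ := sphv_coe.mp hv
        have hfb : ‖f (L w) - g w‖ < δ/4 := by
          rw [hfval]
          have h7 : 6*M^2 * sphDist (sphv f (L w)) ((g w : ℂ) : OnePoint ℂ) < 6*M^2*εf := by
            apply mul_lt_mul_of_pos_left hdist (by positivity)
          have h8 : 6*M^2*εf ≤ δ/4 := by
            have := mul_le_mul_of_nonneg_left hεf2 (show (0:ℝ) ≤ 6*M^2 by positivity)
            calc 6*M^2*εf ≤ 6*M^2*(δ/(24*M^2)) := this
            _ = δ/4 := by field_simp; ring
          linarith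
        have hdz : dist (L w) z₀ < θ := hnB w (hwR w hw)
        obtain ⟨b, hb, hba⟩ := hθP (L w) (ball_subset_closedBall hball) hdz
        rw [hΨeq (L w) hball] at hb
        obtain ⟨hψan, hψval⟩ := sphv_coe.mp hb
        exact ⟨⟨hfan, hfb⟩, ⟨hψan, by rw [hψval]; exact hba⟩, hball⟩
      set F : ℂ → ℂ := fun w => f (L w) - ψ (L w) with hFdef
      have hLan : ∀ w : ℂ, AnalyticAt ℂ L w := fun w =>
        analyticAt_const.add (analyticAt_const.mul analyticAt_id)
      have hFan : ∀ w ∈ closedBall z r, AnalyticAt ℂ F w := by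
        intro w hw
        obtain ⟨⟨h1, -⟩, ⟨h2, -⟩, -⟩ := key w hw
        exact (h1.comp (hLan w)).sub (h2.comp (hLan w))
      have hFne : ∀ w ∈ closedBall z r, F w ≠ 0 := by
        intro w hw
        obtain ⟨⟨h1, -⟩, ⟨h2, -⟩, hball⟩ := key w hw
        have hav := hN n hnN w hball
        have hfψ : f (L w) ≠ ψ (L w) := by
          intro hcon
          apply hav
          change sphv f (L w) = sphv ψ (L w)
          simp only [sphv, if_pos h1, if_pos h2, hcon]
        exact sub_ne_zero.mpr hfψ
      have hFsp : ∀ w ∈ sphere z r, δ/2 ≤ ‖F w‖ := by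
        intro w hw
        obtain ⟨⟨-, h1⟩, ⟨-, h2⟩, -⟩ := key w (sphere_subset_closedBall hw)
        have hT := isMinOn_iff.mp hw₀min w hw
        have hid : g w - a = -(f (L w) - g w) + F w + (ψ (L w) - a) := by
          rw [hFdef]; ring
        have h3 : ‖g w - a‖ ≤
            ‖f (L w) - g w‖ + ‖F w‖ + ‖ψ (L w) - a‖ := by
          rw [hid]
          refine le_trans (abs_add3 _ _ _) ?_
          rw [norm_neg]
        rw [← hδdef] at hT
        linarith
      have hhur := hurwitz_contra hr (show (0:ℝ) < δ/2 by linarith) hFan hFne hFsp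
      obtain ⟨⟨-, h1⟩, ⟨-, h2⟩, -⟩ := key z (mem_closedBall_self hr.le)
      rw [hgz] at h1
      have hid : F z = (f (L z) - a) - (ψ (L z) - a) := by rw [hFdef]; ring
      have h3 : ‖F z‖ ≤ ‖f (L z) - a‖ + ‖ψ (L z) - a‖ := by
        rw [hid]; exact abs_sub_le'' _ _
      linarith
  | infty =>
    rw [hΨv] at heq
    have hgna : ¬ AnalyticAt ℂ g z := sphv_infty.mp heq
    have hpole := (hg.2 z (mem_univ z)).resolve_left hgna
    have hgm := hg.1 z (mem_univ z)
    obtain ⟨φ, hφan, hφ0, hφeq⟩ := pole_inv_analytic hgm hpole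
    have hEv : ∀ᶠ y in 𝓝 z, AnalyticAt ℂ φ y ∧
        (y ≠ z → AnalyticAt ℂ g y ∧ 1 < ‖g y‖ ∧ φ y = (g y)⁻¹) := by
      have e1 := eventually_nhdsWithin_iff.mp
        (hgm.eventually_analyticAt.and ((pole_large hpole 1).and hφeq))
      filter_upwards [hφan.eventually_analyticAt, e1] with y h0 h1
      refine ⟨h0, fun hy => ?_⟩
      obtain ⟨a1, a2, a3⟩ := h1 (Set.mem_compl_singleton_iff.mpr hy)
      exact ⟨a1, a2, a3⟩
    obtain ⟨t, ht, htP⟩ := Metric.eventually_nhds_iff.mp hEv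
    set r := t/2 with hrdef
    have hr : 0 < r := by positivity
    have hKsub : ∀ w ∈ closedBall z r, AnalyticAt ℂ φ w ∧
        (w ≠ z → AnalyticAt ℂ g w ∧ 1 < ‖g w‖ ∧ φ w = (g w)⁻¹) := by
      intro w hw
      rw [mem_closedBall] at hw
      exact htP (by rw [hrdef] at hw; linarith)
    have hsne : (sphere z r).Nonempty := NormedSpace.sphere_nonempty.mpr hr.le
    have hgc : ContinuousOn (fun w => ‖φ w‖) (sphere z r) := by
      intro w hw
      exact (continuous_norm.continuousAt.comp
        (hKsub w (sphere_subset_closedBall hw)).1.continuousAt).continuousWithinAt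
    obtain ⟨w₀, hw₀, hw₀min⟩ := (isCompact_sphere z r).exists_isMinOn hsne hgc
    set δ := ‖φ w₀‖ with hδdef
    have hw₀ne : w₀ ≠ z := by
      intro h
      rw [mem_sphere, h, dist_self] at hw₀
      exact absurd hw₀.symm (ne_of_gt hr)
    obtain ⟨hg₀an, hg₀1, hφ₀⟩ := (hKsub w₀ (sphere_subset_closedBall hw₀)).2 hw₀ne
    have hδ : 0 < δ := by
      rw [hδdef, norm_pos_iff, hφ₀]
      apply inv_ne_zero
      intro hc
      rw [hc] at hg₀1; simp at hg₀1; linarith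
    set M := max 1 (4/δ) with hMdef
    have hM1 : (1:ℝ) ≤ M := le_max_left _ _
    have hM0 : (0:ℝ) ≤ M := by linarith
    set εf := min (1/3) (δ/24) with hεfdef
    have hεf0 : 0 < εf := lt_min (by norm_num) (by positivity)
    have hεf1 : εf ≤ 1/3 := min_le_left _ _
    have hεf2 : εf ≤ δ/24 := min_le_right _ _
    have hεf3 : εf ≤ 1 := by linarith
    obtain ⟨θ, hθ, hθP⟩ := psi_near_infty hΨcw hΨv hM0
    set R := ‖z‖ + r with hRdef
    have hR0 : (0:ℝ) ≤ R := by positivity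
    obtain ⟨n, ⟨hnA, hnB⟩, hnN⟩ :=
      (((hconv (closedBall z r) (isCompact_closedBall z r) εf hεf0).and
        (affine_unif hlim hρ hρ0 hθ hR0)).and (eventually_gt_atTop N)).exists
    set L : ℂ → ℂ := fun x => zn n + (ρn n : ℂ) * x with hLdef
    have hwR : ∀ w ∈ closedBall z r, ‖w‖ ≤ R := by
      intro w hw
      rw [mem_closedBall, Complex.dist_eq] at hw
      calc ‖w‖ = ‖z + (w - z)‖ := by ring_nf
      _ ≤ ‖z‖ + ‖w - z‖ := norm_add_le _ _
      _ ≤ R := by rw [hRdef]; linarith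
    set Ff : ℂ → ℂ := fun x => if AnalyticAt ℂ f x then (f x)⁻¹ else 0 with hFfdef
    set Pf : ℂ → ℂ := fun x => if AnalyticAt ℂ ψ x then (ψ x)⁻¹ else 0 with hPfdef
    have key : ∀ w ∈ closedBall z r,
        (AnalyticAt ℂ Ff (L w) ∧ ‖Ff (L w) - φ w‖ ≤ δ/4) ∧
        (AnalyticAt ℂ Pf (L w) ∧ ‖Pf (L w)‖ < δ/4) ∧
        L w ∈ ball (0:ℂ) 1 ∧ Ff (L w) - Pf (L w) ≠ 0 := by
      intro w hw
      obtain ⟨hball, hdist⟩ := hnA w hw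
      have hdz : dist (L w) z₀ < θ := hnB w (hwR w hw)
      -- ψ side
      have hψside : (AnalyticAt ℂ Pf (L w) ∧ ‖Pf (L w)‖ < δ/4) ∧
          ((AnalyticAt ℂ ψ (L w) ∧ ψ (L w) ≠ 0 ∧ Pf (L w) = (ψ (L w))⁻¹) ∨
           (¬ AnalyticAt ℂ ψ (L w) ∧ Pf (L w) = 0)) := by
        rcases hθP (L w) (ball_subset_closedBall hball) hdz with hcase | ⟨b, hb, hbM⟩
        · rw [hΨeq (L w) hball] at hcase
          have hna := sphv_infty.mp hcase
          have hp := (hψ.2 (L w) hball).resolve_left hna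
          have h1 : AnalyticAt ℂ Pf (L w) := invf_analytic_of_pole (hψ.1 (L w) hball) hna hp
          have h2 : Pf (L w) = 0 := if_neg hna
          exact ⟨⟨h1, by rw [h2, norm_zero]; linarith⟩, Or.inr ⟨hna, h2⟩⟩
        · rw [hΨeq (L w) hball] at hb
          obtain ⟨han, hval⟩ := sphv_coe.mp hb
          have hb1 : (1:ℝ) < ‖b‖ := lt_of_le_of_lt hM1 hbM
          have hbne : ψ (L w) ≠ 0 := by
            rw [hval]; intro hc; rw [hc] at hb1; simp at hb1; linarith
          have h2 : Pf (L w) = (ψ (L w))⁻¹ := if_pos han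
          have h3 : ‖Pf (L w)‖ < δ/4 := by
            rw [h2, norm_inv, hval]
            have h4 : 4/δ < ‖b‖ := lt_of_le_of_lt (le_max_right 1 (4/δ)) hbM
            exact inv_lt_of_one_div_lt (show (0:ℝ) < δ/4 by linarith)
              (by rw [show 1/(δ/4) = 4/δ by rw [one_div_div]]; exact h4)
          exact ⟨⟨invf_analytic_of_ne han hbne, h3⟩, Or.inl ⟨han, hbne, h2⟩⟩
      -- f side
      have hfside : (AnalyticAt ℂ Ff (L w) ∧ ‖Ff (L w) - φ w‖ ≤ δ/4) ∧
          ((AnalyticAt ℂ f (L w) ∧ f (L w) ≠ 0 ∧ Ff (L w) = (f (L w))⁻¹) ∨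
           (¬ AnalyticAt ℂ f (L w) ∧ Ff (L w) = 0)) := by
        by_cases hwz : w = z
        · rw [hwz, heq] at hdist
          rw [hwz] at hball hdz ⊢
          rcases close_infty_of_sphDist_lt hεf0 hεf3 hdist with hinf | ⟨v, hv, hvb⟩
          · have hna := sphv_infty.mp hinf
            have hp := (hf.2 (L z) hball).resolve_left hna
            refine ⟨⟨invf_analytic_of_pole (hf.1 (L z) hball) hna hp, ?_⟩,
              Or.inr ⟨hna, if_neg hna⟩⟩
            simp only [hFfdef]
            rw [if_neg hna, hφ0, sub_zero, norm_zero]; linarith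
          · obtain ⟨han, hval⟩ := sphv_coe.mp hv
            have hεinv : (1:ℝ) < 1/εf := by
              rw [lt_div_iff₀ hεf0]; linarith
            have hv1 : 1 < ‖v‖ := lt_trans hεinv hvb
            have hvne : v ≠ 0 := by
              intro hc; rw [hc] at hv1; simp at hv1; linarith
            have hfne : f (L z) ≠ 0 := by rw [hval]; exact hvne
            refine ⟨⟨invf_analytic_of_ne han hfne, ?_⟩, Or.inl ⟨han, hfne, if_pos han⟩⟩
            simp only [hFfdef]
            rw [if_pos han, hφ0, hval, sub_zero, norm_inv]
            have h5 : (‖v‖)⁻¹ < εf := inv_lt_of_one_div_lt hεf0 hvb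
            linarith
        · obtain ⟨hgan, hg1, hφw⟩ := (hKsub w hw).2 hwz
          have hgw : sphv g w = ((g w : ℂ) : OnePoint ℂ) := sphv_coe.mpr ⟨hgan, rfl⟩
          rw [hgw] at hdist
          have hgwne : g w ≠ 0 := by
            intro hc; rw [hc] at hg1; simp at hg1; linarith
          cases hx : sphv f (L w) with
          | infty =>
            have hna := sphv_infty.mp hx
            have hp := (hf.2 (L w) hball).resolve_left hna
            refine ⟨⟨invf_analytic_of_pole (hf.1 (L w) hball) hna hp, ?_⟩,
              Or.inr ⟨hna, if_neg hna⟩⟩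
            simp only [hFfdef]
            rw [if_neg hna, hφw, zero_sub, norm_neg, norm_inv]
            rw [hx, sphDist_infty_coe] at hdist
            have hd2 : sphDist ((g w : ℂ) : OnePoint ℂ) ∞ < εf := by
              rw [sphDist_coe_infty]; exact hdist
            rcases close_infty_of_sphDist_lt hεf0 hεf3 hd2 with habs | ⟨v, hv, hvb⟩
            · exact absurd habs (OnePoint.coe_ne_infty _)
            · have hveq : g w = v := OnePoint.coe_injective hv
              rw [hveq]
              have h5 : (‖v‖)⁻¹ < εf := inv_lt_of_one_div_lt hεf0 hvb
              linarith
          | coe v =>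
            have hvne : v ≠ 0 := by
              intro hc
              rw [hx, hc] at hdist
              have h1 := one_le_sphDist_zero (Or.inr ⟨g w, rfl, hg1.le⟩)
              linarith
            obtain ⟨han, hval⟩ := sphv_coe.mp hx
            have hfne : f (L w) ≠ 0 := by rw [hval]; exact hvne
            refine ⟨⟨invf_analytic_of_ne han hfne, ?_⟩, Or.inl ⟨han, hfne, if_pos han⟩⟩
            simp only [hFfdef]
            rw [if_pos han, hval, hφw]
            have hiso := sphDist_inv_inv hvne hgwne
            rw [hx] at hdist
            have hd3 : sphDist ((v⁻¹ : ℂ) : OnePoint ℂ) ↑((g w)⁻¹) < 1/(3*1) := by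
              rw [hiso, show (1:ℝ)/(3*1) = 1/3 by norm_num]
              exact lt_of_lt_of_le hdist hεf1
            have hbgw : ‖(g w)⁻¹‖ ≤ 1 := by
              rw [norm_inv]
              exact inv_le_one_of_one_le₀ hg1.le
            obtain ⟨u'', hu'', hub⟩ := close_of_sphDist_lt le_rfl hbgw hd3
            have hueq : u'' = v⁻¹ := (OnePoint.coe_injective hu'').symm
            rw [hueq] at hub
            rw [hiso] at hub
            have h7 : 6*(1:ℝ)^2 * sphDist ((v : OnePoint ℂ)) ↑(g w) < 6*εf := by
              have := mul_lt_mul_of_pos_left hdist (show (0:ℝ) < 6*1^2 by norm_num)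
              calc 6*(1:ℝ)^2 * sphDist ((v : OnePoint ℂ)) ↑(g w) < 6*1^2*εf := this
              _ = 6*εf := by norm_num
            have h8 : 6*εf ≤ δ/4 := by linarith
            linarith
      -- nonvanishing
      have hne : Ff (L w) - Pf (L w) ≠ 0 := by
        have hav := hN n hnN w hball
        rcases hfside.2 with ⟨hfa, hf0, hfe⟩ | ⟨hfna, hfe⟩ <;>
          rcases hψside.2 with ⟨hpa, hp0, hpe⟩ | ⟨hpna, hpe⟩
        · have hfψ : f (L w) ≠ ψ (L w) := by
            intro hc; apply hav
            change sphv f (L w) = sphv ψ (L w)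
            simp only [sphv, if_pos hfa, if_pos hpa, hc]
          rw [hfe, hpe]
          exact sub_ne_zero.mpr (fun hc => hfψ (inv_injective hc))
        · rw [hfe, hpe, sub_zero]; exact inv_ne_zero hf0
        · rw [hfe, hpe, zero_sub, neg_ne_zero]; exact inv_ne_zero hp0
        · exfalso; apply hav
          change sphv f (L w) = sphv ψ (L w)
          simp only [sphv, if_neg hfna, if_neg hpna]
      exact ⟨hfside.1, hψside.1, hball, hne⟩
    set F : ℂ → ℂ := fun w => Ff (L w) - Pf (L w) with hFdef
    have hLan : ∀ w : ℂ, AnalyticAt ℂ L w := fun w =>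
      analyticAt_const.add (analyticAt_const.mul analyticAt_id)
    have hFan : ∀ w ∈ closedBall z r, AnalyticAt ℂ F w := by
      intro w hw
      obtain ⟨⟨h1, -⟩, ⟨h2, -⟩, -, -⟩ := key w hw
      exact (h1.comp (hLan w)).sub (h2.comp (hLan w))
    have hFne : ∀ w ∈ closedBall z r, F w ≠ 0 := by
      intro w hw
      obtain ⟨-, -, -, hne⟩ := key w hw
      exact hne
    have hFsp : ∀ w ∈ sphere z r, δ/2 ≤ ‖F w‖ := by
      intro w hw
      obtain ⟨⟨-, h1⟩, ⟨-, h2⟩, -, -⟩ := key w (sphere_subset_closedBall hw)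
      have hT := isMinOn_iff.mp hw₀min w hw
      rw [← hδdef] at hT
      have hid : φ w = -(Ff (L w) - φ w) + F w + Pf (L w) := by
        rw [hFdef]; ring
      have h3 : ‖φ w‖ ≤
          ‖Ff (L w) - φ w‖ + ‖F w‖ + ‖Pf (L w)‖ := by
        have e := abs_add3 (-(Ff (L w) - φ w)) (F w) (Pf (L w))
        rw [← hid, norm_neg] at e
        exact e
      linarith
    have hhur := hurwitz_contra hr (show (0:ℝ) < δ/2 by linarith) hFan hFne hFsp
    obtain ⟨⟨-, h1⟩, ⟨-, h2⟩, -, -⟩ := key z (mem_closedBall_self hr.le)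
    rw [hφ0, sub_zero] at h1
    have hid : F z = Ff (L z) - Pf (L z) := rfl
    have h3 : ‖F z‖ ≤ ‖Ff (L z)‖ + ‖Pf (L z)‖ := by
      rw [hid]; exact abs_sub_le'' _ _
    linarith


end
end

section
/- Let f(z) = tan(1/(1 − z)) on the unit disc 𝔻. Then: (i) f(z) ≠ i and f(z) ≠ −i for every z ∈ 𝔻 at which f is analytic (so the sets {z ∈ 𝔻 : f(z) = i} and {z ∈ 𝔻 : f(z) = −i} are both empty); and (ii) the set {z ∈ 𝔻 : f(z) = 1} equals {1 − 4/((4k + 1)π) : k ∈ ℕ ∪ {0}}. -/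
open Complex Filter Topology Metric Set
open scoped OnePoint Classical

noncomputable section

lemma aux_sin_ne (w : ℂ) (h : Complex.sin w ^ 2 = -(Complex.cos w ^ 2)) : False := by
  have h1 := Complex.sin_sq_add_cos_sq w
  rw [h] at h1
  simp at h1

lemma tan_ne_I (w : ℂ) : Complex.tan w ≠ Complex.I := by
  intro h
  by_cases hc : Complex.cos w = 0
  · rw [Complex.tan_eq_sin_div_cos, hc, div_zero] at h
    exact Complex.I_ne_zero h.symm
  · rw [Complex.tan_eq_sin_div_cos, div_eq_iff hc] at h
    apply aux_sin_ne w
    rw [h]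
    linear_combination (Complex.cos w)^2 * Complex.I_sq

lemma tan_ne_neg_I (w : ℂ) : Complex.tan w ≠ -Complex.I := by
  intro h
  by_cases hc : Complex.cos w = 0
  · rw [Complex.tan_eq_sin_div_cos, hc, div_zero] at h
    exact Complex.I_ne_zero (neg_eq_zero.mp h.symm)
  · rw [Complex.tan_eq_sin_div_cos, div_eq_iff hc] at h
    apply aux_sin_ne w
    rw [h]
    linear_combination (Complex.cos w)^2 * Complex.I_sq

lemma tan_eq_one_iff (w : ℂ) :
    Complex.tan w = 1 ↔ ∃ k : ℤ, w = ((Real.pi / 4 + k * Real.pi : ℝ) : ℂ) := by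
  constructor
  · intro h
    have hc : Complex.cos w ≠ 0 := by
      intro hc
      rw [Complex.tan_eq_sin_div_cos, hc, div_zero] at h
      exact one_ne_zero h.symm
    have hs : Complex.sin w = Complex.cos w := by
      rw [Complex.tan_eq_sin_div_cos, div_eq_one_iff_eq hc] at h
      exact h
    have c4 : Complex.cos ((Real.pi / 4 : ℝ) : ℂ) = Complex.sin ((Real.pi / 4 : ℝ) : ℂ) := by
      rw [← Complex.ofReal_cos, ← Complex.ofReal_sin, Real.cos_pi_div_four,
        Real.sin_pi_div_four]
    have h0 : Complex.sin (w - ((Real.pi / 4 : ℝ) : ℂ)) = 0 := by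
      rw [Complex.sin_sub, c4, hs]; ring
    obtain ⟨k, hk⟩ := Complex.sin_eq_zero_iff.mp h0
    refine ⟨k, ?_⟩
    push_cast
    push_cast at hk
    linear_combination hk
  · rintro ⟨k, rfl⟩
    rw [← Complex.ofReal_tan]
    norm_cast
    rw [(Real.tan_periodic.int_mul k) (Real.pi / 4), Real.tan_pi_div_four]

lemma cos_pt_ne (k : ℤ) : Complex.cos ((Real.pi / 4 + k * Real.pi : ℝ) : ℂ) ≠ 0 := by
  rw [← Complex.ofReal_cos]
  simp only [ne_eq, Complex.ofReal_eq_zero]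
  rw [Real.cos_add_int_mul_pi, Real.cos_pi_div_four]
  have h2 : Real.sqrt 2 / 2 ≠ 0 := by positivity
  exact mul_ne_zero (zpow_ne_zero k (by norm_num : (-1:ℝ) ≠ 0)) h2

/-- **Example (sharpness of three).** For `f(z) = tan(1/(1-z))` on the unit disc:
(i) `f` omits the values `i` and `-i` (so the sets `{z ∈ 𝔻 : f(z) = i}` and
`{z ∈ 𝔻 : f(z) = -i}` are empty), and
(ii) `{z ∈ 𝔻 : f(z) = 1} = {1 - 4/((4k+1)π) : k ∈ ℕ}`. -/
theorem tan_one_div_one_sub_value_sets :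
    (∀ z ∈ ball (0 : ℂ) 1,
        AnalyticAt ℂ (fun z : ℂ => Complex.tan (1 / (1 - z))) z →
        Complex.tan (1 / (1 - z)) ≠ Complex.I ∧
        Complex.tan (1 / (1 - z)) ≠ -Complex.I) ∧
    {z | z ∈ ball (0 : ℂ) 1 ∧
        sphv (fun z : ℂ => Complex.tan (1 / (1 - z))) z = (Complex.I : OnePoint ℂ)} = ∅ ∧
    {z | z ∈ ball (0 : ℂ) 1 ∧
        sphv (fun z : ℂ => Complex.tan (1 / (1 - z))) z = ((-Complex.I : ℂ) : OnePoint ℂ)} = ∅ ∧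
    {z | z ∈ ball (0 : ℂ) 1 ∧
        sphv (fun z : ℂ => Complex.tan (1 / (1 - z))) z = ((1 : ℂ) : OnePoint ℂ)} =
      {z : ℂ | ∃ k : ℕ, z = ((1 - 4 / ((4 * (k : ℝ) + 1) * Real.pi) : ℝ) : ℂ)} := by
  refine ⟨fun z _ _ => ⟨tan_ne_I _, tan_ne_neg_I _⟩, ?_, ?_, ?_⟩
  · rw [eq_empty_iff_forall_notMem]
    rintro z ⟨hz, h⟩
    simp only [sphv] at h
    split_ifs at h with ha
    · exact tan_ne_I _ (OnePoint.coe_eq_coe.mp h)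
    · exact OnePoint.infty_ne_coe _ h
  · rw [eq_empty_iff_forall_notMem]
    rintro z ⟨hz, h⟩
    simp only [sphv] at h
    split_ifs at h with ha
    · exact tan_ne_neg_I _ (OnePoint.coe_eq_coe.mp h)
    · exact OnePoint.infty_ne_coe _ h
  · ext z
    simp only [Set.mem_setOf_eq]
    constructor
    · rintro ⟨hz, h⟩
      simp only [sphv] at h
      split_ifs at h with ha
      swap
      · exact absurd h (OnePoint.infty_ne_coe _)
      have htan : Complex.tan (1 / (1 - z)) = 1 := OnePoint.coe_eq_coe.mp h
      obtain ⟨n, hn⟩ := (tan_eq_one_iff _).mp htan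
      have hzlt : ‖z‖ < 1 := by simpa [mem_ball_zero_iff] using hz
      have h1z : (1 : ℂ) - z ≠ 0 := by
        intro h0
        have : z = 1 := by linear_combination -h0
        rw [this] at hzlt; simp at hzlt
      set a : ℝ := Real.pi / 4 + (n : ℝ) * Real.pi with ha_def
      have hane : a ≠ 0 := by
        intro h0
        rw [h0] at hn
        simp only [Complex.ofReal_zero] at hn
        exact one_div_ne_zero h1z (by rw [hn])
      have hac : (a : ℂ) ≠ 0 := Complex.ofReal_ne_zero.mpr hane
      rw [div_eq_iff h1z] at hn
      have hz_eq : z = ((1 - 1 / a : ℝ) : ℂ) := by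
        have hd : (1 : ℂ) / (a : ℂ) = 1 - z := by
          rw [eq_comm, eq_div_iff hac]
          linear_combination -hn
        rw [show ((1 - 1 / a : ℝ) : ℂ) = 1 - 1 / (a : ℂ) by push_cast; ring, hd]
        ring
      have hrlt : |1 - 1 / a| < 1 := by
        rw [hz_eq, Complex.norm_real, Real.norm_eq_abs] at hzlt
        exact hzlt
      have hapos : 0 < a := by
        rcases lt_trichotomy a 0 with hlt | heq | hgt
        · exfalso
          have : 1 / a < 0 := div_neg_of_pos_of_neg one_pos hlt
          have := abs_lt.mp hrlt
          linarith [this.2]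
        · exact absurd heq hane
        · exact hgt
      have hn0 : 0 ≤ n := by
        by_contra hneg
        push_neg at hneg
        have hn1 : (n : ℝ) ≤ -1 := by exact_mod_cast (by omega : n ≤ -1)
        have hpipos := Real.pi_pos
        have hnp : (n : ℝ) * Real.pi ≤ -Real.pi := by nlinarith
        rw [ha_def] at hapos
        linarith
      refine ⟨n.toNat, ?_⟩
      rw [hz_eq]
      apply congrArg Complex.ofReal
      have hcast : ((n.toNat : ℝ)) = (n : ℝ) := by exact_mod_cast Int.toNat_of_nonneg hn0
      rw [hcast]
      have hnR : (0 : ℝ) ≤ (n : ℝ) := by exact_mod_cast hn0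
      have hb : (0 : ℝ) < (4 * (n : ℝ) + 1) * Real.pi := by positivity
      have hfin : 1 / a = 4 / ((4 * (n : ℝ) + 1) * Real.pi) := by
        rw [ha_def] at hane ⊢
        rw [div_eq_div_iff hane hb.ne']
        ring
      rw [hfin]
    · rintro ⟨k, rfl⟩
      have hpi := Real.pi_gt_three
      have hb : (0 : ℝ) < (4 * (k : ℝ) + 1) * Real.pi := by positivity
      set t : ℝ := 4 / ((4 * (k : ℝ) + 1) * Real.pi) with ht_def
      have htpos : 0 < t := by positivity
      have htlt : t < 2 := by
        rw [ht_def, div_lt_iff₀ hb]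
        nlinarith [Nat.cast_nonneg (α := ℝ) k]
      have hball : ((1 - t : ℝ) : ℂ) ∈ ball (0 : ℂ) 1 := by
        rw [mem_ball_zero_iff]
        rw [Complex.norm_real]
        rw [Real.norm_eq_abs, abs_lt]
        constructor <;> linarith
      have h1 : (1 : ℂ) - ((1 - t : ℝ) : ℂ) = (t : ℂ) := by push_cast; ring
      have h1ne : (1 : ℂ) - ((1 - t : ℝ) : ℂ) ≠ 0 := by
        rw [h1]
        exact_mod_cast ne_of_gt htpos
      have hw : 1 / (1 - ((1 - t : ℝ) : ℂ)) = ((Real.pi / 4 + ((k : ℤ) : ℝ) * Real.pi : ℝ) : ℂ) := by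
        rw [h1]
        have htne : (t : ℂ) ≠ 0 := by rwa [h1] at h1ne
        rw [div_eq_iff htne]
        have hrt : (Real.pi / 4 + ((k : ℤ) : ℝ) * Real.pi) * t = 1 := by
          rw [ht_def]
          field_simp
          push_cast
          ring
        exact_mod_cast hrt.symm
      have hcos : Complex.cos (1 / (1 - ((1 - t : ℝ) : ℂ))) ≠ 0 := by
        rw [hw]; exact cos_pt_ne k
      have htan : Complex.tan (1 / (1 - ((1 - t : ℝ) : ℂ))) = 1 := by
        rw [hw]
        exact (tan_eq_one_iff _).mpr ⟨k, rfl⟩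
      have hA : AnalyticAt ℂ (fun z : ℂ => Complex.tan (1 / (1 - z))) ((1 - t : ℝ) : ℂ) := by
        rw [analyticAt_iff_eventually_differentiableAt]
        have hcont : ContinuousAt (fun w : ℂ => Complex.cos (1 / (1 - w))) ((1 - t : ℝ) : ℂ) :=
          Complex.continuous_cos.continuousAt.comp
            (continuousAt_const.div (continuousAt_const.sub continuousAt_id) h1ne)
        have hc_ev : ∀ᶠ w in 𝓝 (((1 - t : ℝ) : ℂ)), Complex.cos (1 / (1 - w)) ≠ 0 :=
          hcont.eventually_ne hcos
        have h1_ev : ∀ᶠ w in 𝓝 (((1 - t : ℝ) : ℂ)), (1 : ℂ) - w ≠ 0 :=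
          (continuousAt_const.sub continuousAt_id).eventually_ne h1ne
        filter_upwards [hc_ev, h1_ev] with w hcw h1w
        have hg : DifferentiableAt ℂ (fun w : ℂ => 1 / (1 - w)) w :=
          (differentiableAt_const _).div ((differentiableAt_const _).sub differentiableAt_id) h1w
        exact (Complex.differentiableAt_tan.mpr hcw).comp w hg
      refine ⟨hball, ?_⟩
      simp only [sphv, if_pos hA]
      exact congrArg _ htan


end
end
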